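/- Let w ∈ W_Π be an element of order two in the stabilizer of the extended (affine) simple root set Π of a root system R of adjoint type, and let ω̌_j be the unique minuscule coweight with w·ω̌_j = −ω̌_j. Write w = r_1 r_2 ⋯ r_m as a product of reflections in mutually orthogonal roots γ_1,…,γ_m, with signs chosen so that ⟨γ_i, ω̌_j⟩ = 1 for all i. Then γ̌_1 + γ̌_2 + ⋯ + γ̌_m = 2ω̌_j. -/

import Mathlib

open scoped InnerProductSpace
open Module

variable {V : Type*} [NormedAddCommGroup V] [InnerProductSpace ℝ V] [FiniteDimensional ℝ V]

/-- The Cartan pairing `⟨β, α̌⟩ = 2⟪α, β⟫/⟪α, α⟫`. -/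
noncomputable def cpair (α β : V) : ℝ := 2 * ⟪α, β⟫_ℝ / ⟪α, α⟫_ℝ

/-- Axioms for a (crystallographic) finite root system `R` spanning `V`. -/
structure IsRootSystem (R : Finset V) : Prop where
  nonzero : ∀ α ∈ R, α ≠ 0
  span : Submodule.span ℝ (R : Set V) = ⊤
  reflMem : ∀ α ∈ R, ∀ β ∈ R, β - cpair α β • α ∈ R
  pairInt : ∀ α ∈ R, ∀ β ∈ R, ∃ n : ℤ, (n : ℝ) = cpair α β

/-- `R` is reduced: the only multiples of a root which are roots are `±` itself. -/
def IsReducedRS (R : Finset V) : Prop := ∀ α ∈ R, ∀ t : ℝ, t • α ∈ R → t = 1 ∨ t = -1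

/-- `R` is irreducible: it admits no nontrivial orthogonal decomposition. -/
def IsIrreducibleRS (R : Finset V) : Prop :=
  (R : Set V).Nonempty ∧
    ∀ S : Finset V, S ⊆ R → (∀ α ∈ S, ∀ β ∈ R, β ∉ S → ⟪α, β⟫_ℝ = 0) → S = ∅ ∨ S = R

/-- `Δ` is a base (set of simple roots) of the root system `R`. -/
structure IsBaseRS (R Δ : Finset V) : Prop where
  subset : Δ ⊆ R
  indep : LinearIndependent ℝ (fun β : (Δ : Set V) => (β : V))
  span : Submodule.span ℝ (Δ : Set V) = ⊤
  decomp : ∀ α ∈ R,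
      (∃ c : V → ℤ, α = ∑ β ∈ Δ, (c β : ℝ) • β ∧ ∀ β ∈ Δ, 0 ≤ c β) ∨
      (∃ c : V → ℤ, α = ∑ β ∈ Δ, (c β : ℝ) • β ∧ ∀ β ∈ Δ, c β ≤ 0)

/-- The Weyl group of `R`: the subgroup of `GL(V)` generated by the root reflections. -/
def weylGroup (R : Finset V) : Subgroup (V ≃ₗ[ℝ] V) :=
  Subgroup.closure {g | ∃ α ∈ R, ∀ v, g v = v - cpair α v • α}

/-- The coroot-type functional `v ↦ 2⟪α, v⟫/⟪α, α⟫` as a linear functional. -/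
noncomputable def coformL (α : V) : Module.Dual ℝ V where
  toFun v := 2 * ⟪α, v⟫_ℝ / ⟪α, α⟫_ℝ
  map_add' x y := by simp only [inner_add_right]; ring
  map_smul' t x := by
    simp only [real_inner_smul_right, smul_eq_mul, RingHom.id_apply]
    ring

/-- The reflection in the root `α` (the identity as junk value if `α` is degenerate). -/
noncomputable def rootRefl (α : V) : V ≃ₗ[ℝ] V :=
  if h : coformL α α = 2 then Module.reflection h else LinearEquiv.refl ℝ V

/-- The action of `GL(V)` on the dual space: `(g • f) = f ∘ g⁻¹`. -/
def dAct (g : V ≃ₗ[ℝ] V) (f : Module.Dual ℝ V) : Module.Dual ℝ V :=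
  f ∘ₗ (g.symm : V →ₗ[ℝ] V)

/-- The coweight lattice `X̌ = Hom(ℤR, ℤ)`, realised as the integer-valued
linear functionals inside `V* = ℝ ⊗ X̌`. -/
def coweightLat (R : Finset V) : Set (Module.Dual ℝ V) :=
  {f | ∀ α ∈ R, ∃ n : ℤ, f α = (n : ℝ)}

private lemma list_prod_fix {V : Type*} [NormedAddCommGroup V] [InnerProductSpace ℝ V]
    (v : V) : ∀ l : List (V ≃ₗ[ℝ] V), (∀ g ∈ l, g v = v) → l.prod v = v := by
  intro l
  induction l with
  | nil => intro _; simp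
  | cons g t ih =>
      intro h
      have : (g * t.prod) v = g (t.prod v) := rfl
      rw [List.prod_cons, this, ih (fun x hx => h x (List.mem_cons_of_mem g hx)),
        h g List.mem_cons_self]

/-- Let `w` be an involution in the stabilizer `W_Π` of the
extended simple-root set `Π = {α₀} ∪ Δ`, and let `ω̌` be the (unique) minuscule
coweight with `w·ω̌ = −ω̌`.  Write `w = r₁ ⋯ r_N` as a product of reflections
in mutually orthogonal roots `γ₁, …, γ_N`, with signs chosen so that
`⟨γ_i, ω̌⟩ = 1` for all `i`.  Then `γ̌₁ + ⋯ + γ̌_N = 2ω̌`. -/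
theorem sum_coroots_eq_two_minuscule
    {V : Type*} [NormedAddCommGroup V] [InnerProductSpace ℝ V] [FiniteDimensional ℝ V]
    (R Δ : Finset V) (hRS : IsRootSystem R) (hred : IsReducedRS R)
    (hirr : IsIrreducibleRS R) (hΔ : IsBaseRS R Δ)
    (α₀ : V) (hα₀ : α₀ ∈ R)
    (w : V ≃ₗ[ℝ] V) (hwR : (w : V → V) '' R = R)
    (hwPi : (w : V → V) '' (insert α₀ (Δ : Set V)) = insert α₀ (Δ : Set V))
    (hw2 : w * w = 1) (hwne : w ≠ 1)
    (ω : V) (hmin : ∀ α ∈ R, ⟪α, ω⟫_ℝ ∈ ({-1, 0, 1} : Set ℝ))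
    (hωneg : w ω = -ω)
    (N : ℕ) (γ : Fin N → V) (hγinj : Function.Injective γ)
    (hγR : ∀ i, γ i ∈ R)
    (hγorth : ∀ i j, i ≠ j → ⟪γ i, γ j⟫_ℝ = 0)
    (hγneg : ∀ i, w (γ i) = -(γ i))
    (hγω : ∀ i, ⟪γ i, ω⟫_ℝ = 1)
    (hwprod : w = (List.ofFn fun i => rootRefl (γ i)).prod) :
    ∑ i : Fin N, (2 / ⟪γ i, γ i⟫_ℝ) • γ i = (2 : ℝ) • ω := by
  -- norms of the γ i are nonzero
  have hγnz : ∀ i, ⟪γ i, γ i⟫_ℝ ≠ 0 := fun i =>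
    fun h => hRS.nonzero (γ i) (hγR i) (inner_self_eq_zero.mp h)
  -- the candidate expression of ω inside the span of the γ i
  set s : V := ∑ i : Fin N, (⟪γ i, γ i⟫_ℝ)⁻¹ • γ i with hs
  set v : V := ω - s with hv
  -- v is orthogonal to every γ j
  have horth : ∀ j, ⟪γ j, v⟫_ℝ = 0 := by
    intro j
    have : ⟪γ j, s⟫_ℝ = 1 := by
      rw [hs, inner_sum]
      rw [Finset.sum_eq_single j]
      · rw [real_inner_smul_right]
        exact inv_mul_cancel₀ (hγnz j)
      · intro i _ hij
        rw [real_inner_smul_right, hγorth j i (Ne.symm hij), mul_zero]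
      · intro h; exact absurd (Finset.mem_univ j) h
    rw [hv, inner_sub_right, hγω j, this, sub_self]
  -- each reflection fixes v
  have hrefl_fix : ∀ i, rootRefl (γ i) v = v := by
    intro i
    have h2 : coformL (γ i) (γ i) = 2 := by
      show 2 * ⟪γ i, γ i⟫_ℝ / ⟪γ i, γ i⟫_ℝ = 2
      rw [mul_div_assoc, div_self (hγnz i), mul_one]
    rw [rootRefl, dif_pos h2, Module.reflection_apply]
    have : coformL (γ i) v = 0 := by
      show 2 * ⟪γ i, v⟫_ℝ / ⟪γ i, γ i⟫_ℝ = 0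
      rw [horth i]; ring
    rw [this, zero_smul, sub_zero]
  -- hence w fixes v
  have hwv : w v = v := by
    rw [hwprod]
    apply list_prod_fix
    intro g hg
    rw [List.mem_ofFn] at hg
    obtain ⟨i, rfl⟩ := hg
    exact hrefl_fix i
  -- but w also negates v
  have hws : w s = -s := by
    rw [hs, map_sum]
    rw [← Finset.sum_neg_distrib]
    apply Finset.sum_congr rfl
    intro i _
    rw [map_smul, hγneg i, smul_neg]
  have hwv' : w v = -v := by
    rw [hv, map_sub, hωneg, hws]
    show -ω - -s = -(ω - s)
    abel
  have hv0 : v = 0 := by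
    have hvn : v = -v := hwv.symm.trans hwv'
    have h2 : (2 : ℝ) • v = 0 := by
      rw [two_smul]
      nth_rewrite 2 [hvn]
      exact add_neg_cancel v
    rcases smul_eq_zero.mp h2 with h | h
    · norm_num at h
    · exact h
  have hωs : ω = s := by
    have h := hv0
    rw [hv] at h
    exact sub_eq_zero.mp h
  rw [hωs, hs, Finset.smul_sum]
  apply Finset.sum_congr rfl
  intro i _
  rw [smul_smul]
  congr 1
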